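/- Let r ≥ 2 and let a_1, …, a_r ≥ 1 be integers with d = gcd(a_1,…,a_r). Let H = {z ∈ ℤ^r : Σ_i a_i z_i = 0}, let (v_1, …, v_{r−1}) be a ℤ-basis of H, and for m ∈ ℕ let H_m = {l ∈ ℕ^r : Σ_i a_i l_i = m}. Fix an integer m_0 ≥ 1 and u ∈ H_{m_0}, and set C_u = (u + Σ_{j=1}^{r−1} [0,1)·v_j) ∩ (m_0·Δ_a) and K_u = {λ·x : λ ∈ ℝ_{≥0}, x ∈ C_u}. Then: (i) there is a constant K > 0 (depending on a, the v_j, m_0 and u) such that for all m ≥ 1 the set K_u ∩ H_m is finite of cardinality at most K·(m/m_0)^{r−1}; (ii) if moreover C_u is contained in the relative interior of m_0·Δ_a in the affine hyperplane {t ∈ ℝ^r : Σ_i a_i t_i = m_0}, then card(K_u ∩ H_m) · (m_0/m)^{r−1} → 1 as m → ∞ along multiples of d. -/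

import Mathlib

lemma stmt11_bezout {r : ℕ} (a : Fin r → ℕ) :
    ∃ w : Fin r → ℤ, ∑ i, (a i : ℤ) * w i = ((Finset.univ.gcd a : ℕ) : ℤ) := by
  set I : Ideal ℤ := Ideal.span (Set.range fun i => (a i : ℤ)) with hI
  set g : ℤ := Submodule.IsPrincipal.generator I with hg
  have hgen : I = Ideal.span {g} := (Ideal.span_singleton_generator I).symm
  have hga : ∀ i, g ∣ (a i : ℤ) := fun i => by
    rw [← Ideal.mem_span_singleton, ← hgen]
    exact Ideal.subset_span ⟨i, rfl⟩
  have hnat : ∀ i, g.natAbs ∣ a i := fun i => by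
    have h := Int.natAbs_dvd_natAbs.mpr (hga i)
    simpa using h
  have hgd : g ∣ ((Finset.univ.gcd a : ℕ) : ℤ) := by
    have h1 : g.natAbs ∣ Finset.univ.gcd a := Finset.dvd_gcd fun i _ => hnat i
    exact Int.natAbs_dvd.mp (Int.natCast_dvd_natCast.mpr h1)
  have hmem : ((Finset.univ.gcd a : ℕ) : ℤ) ∈ I := by
    rw [hgen, Ideal.mem_span_singleton]; exact hgd
  obtain ⟨c, hc⟩ := Ideal.mem_span_range_iff_exists_fun.mp hmem
  exact ⟨c, by rw [← hc]; exact Finset.sum_congr rfl fun i _ => mul_comm _ _⟩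

lemma stmt11_li {n : ℕ} (b : Fin n → Fin n → ℤ)
    (hspan : ∀ z : Fin n → ℤ, z ∈ Submodule.span ℤ (Set.range b)) :
    LinearIndependent ℝ (fun j => fun i => (b j i : ℝ)) := by
  set B : Fin n → Fin n → ℝ := fun j i => (b j i : ℝ) with hBdef
  have hsingle : ∀ i : Fin n, (Pi.single i 1 : Fin n → ℝ) ∈ Submodule.span ℝ (Set.range B) := by
    intro i
    obtain ⟨c, hc⟩ := (Submodule.mem_span_range_iff_exists_fun ℤ).mp (hspan (Pi.single i 1))
    have key : (Pi.single i 1 : Fin n → ℝ) = ∑ j, (c j : ℝ) • B j := by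
      funext i'
      have h : ∑ x, c x * b x i' = (Pi.single i 1 : Fin n → ℤ) i' := by
        simpa using congrFun hc i'
      have h2 : ∑ x, (c x : ℝ) * (b x i' : ℝ) = ((Pi.single i 1 : Fin n → ℤ) i' : ℝ) := by
        exact_mod_cast congrArg (Int.cast : ℤ → ℝ) h
      simp only [Finset.sum_apply, Pi.smul_apply, smul_eq_mul, hBdef]
      rw [h2]
      simp [Pi.single_apply, apply_ite (Int.cast : ℤ → ℝ)]
    rw [key]
    exact Submodule.sum_mem _ fun j _ => Submodule.smul_mem _ _ (Submodule.subset_span ⟨j, rfl⟩)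
  have htop : ⊤ ≤ Submodule.span ℝ (Set.range B) := by
    intro x _
    have hx : x = ∑ i, x i • (Pi.single i 1 : Fin n → ℝ) := by
      funext i'
      simp [Pi.single_apply, Finset.sum_apply]
    rw [hx]
    exact Submodule.sum_mem _ fun i _ => Submodule.smul_mem _ _ (hsingle i)
  have hcard : Fintype.card (Fin n) = Module.finrank ℝ (Fin n → ℝ) := by
    simp [Module.finrank_fintype_fun_eq_card]
  have hB := coe_basisOfTopLeSpanOfCardEqFinrank B htop hcard
  have hli := (basisOfTopLeSpanOfCardEqFinrank B htop hcard).linearIndependent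
  rwa [hB] at hli

lemma stmt11_intpos {r : ℕ} (hr : 2 ≤ r) (a : Fin r → ℕ) (ha : ∀ i, 1 ≤ a i)
    (m₀ : ℕ) (hm₀ : 1 ≤ m₀) :
    ∀ y ∈ intrinsicInterior ℝ
      {x : Fin r → ℝ | (∀ i, 0 ≤ x i) ∧ ∑ i, (a i : ℝ) * x i = (m₀ : ℝ)},
      ∀ i, 0 < y i := by
  set Δ : Set (Fin r → ℝ) :=
    {x : Fin r → ℝ | (∀ i, 0 ≤ x i) ∧ ∑ i, (a i : ℝ) * x i = (m₀ : ℝ)} with hΔ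
  intro y hy i
  rw [intrinsicInterior] at hy
  obtain ⟨p, hp, hpy⟩ := hy
  have hyΔ : y ∈ Δ := by
    rw [← hpy]
    exact (interior_subset hp : p ∈ _)
  rcases lt_or_eq_of_le (hyΔ.1 i) with h | h
  · exact h
  exfalso
  -- y i = 0
  obtain ⟨k, hk⟩ := Fintype.exists_ne_of_one_lt_card (by simp; omega) i
  have hai : (0:ℝ) < a i := by exact_mod_cast ha i
  have hak : (0:ℝ) < a k := by exact_mod_cast ha k
  have hm₀' : (0:ℝ) < m₀ := by exact_mod_cast hm₀
  -- two vertices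
  set P1 : Fin r → ℝ := fun j => if j = i then (m₀ : ℝ) / a i else 0 with hP1
  set P2 : Fin r → ℝ := fun j => if j = k then (m₀ : ℝ) / a k else 0 with hP2
  have hP1Δ : P1 ∈ Δ := by
    constructor
    · intro j; dsimp [P1]; split <;> positivity
    · simp only [P1, mul_ite, mul_zero, Finset.sum_ite_eq' Finset.univ]
      simp [ne_of_gt hai]
      field_simp
  have hP2Δ : P2 ∈ Δ := by
    constructor
    · intro j; dsimp [P2]; split <;> positivity
    · simp only [P2, mul_ite, mul_zero, Finset.sum_ite_eq' Finset.univ]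
      simp [ne_of_gt hak]
      field_simp
  set χ : Fin r → ℝ := P1 - P2 with hχ
  have hχdir : χ ∈ (affineSpan ℝ Δ).direction :=
    AffineSubspace.vsub_mem_direction (subset_affineSpan ℝ Δ hP1Δ) (subset_affineSpan ℝ Δ hP2Δ)
  have hχi : χ i = (m₀ : ℝ) / a i := by
    simp [hχ, hP1, hP2, hk.symm]
  have hyspan : y ∈ affineSpan ℝ Δ := subset_affineSpan ℝ Δ hyΔ
  have hmem : ∀ ε : ℝ, y - ε • χ ∈ affineSpan ℝ Δ := by
    intro ε
    have : y - ε • χ = (-ε) • χ +ᵥ y := by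
      simp only [vadd_eq_add, neg_smul]
      abel
    rw [this]
    exact AffineSubspace.vadd_mem_of_mem_direction
      (Submodule.smul_mem _ _ hχdir) hyspan
  set γ : ℝ → affineSpan ℝ Δ := fun ε => ⟨y - ε • χ, hmem ε⟩ with hγ
  have hγcont : Continuous γ := by
    apply Continuous.subtype_mk
    fun_prop
  have hγ0 : γ 0 = p := by
    apply Subtype.ext
    simp [hγ, hpy]
  have hopen : IsOpen (γ ⁻¹' interior ((Subtype.val : affineSpan ℝ Δ → (Fin r → ℝ)) ⁻¹' Δ)) :=
    isOpen_interior.preimage hγcont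
  have h0mem : (0:ℝ) ∈ γ ⁻¹' interior ((Subtype.val : affineSpan ℝ Δ → (Fin r → ℝ)) ⁻¹' Δ) := by
    simp only [Set.mem_preimage, hγ0]
    exact hp
  obtain ⟨ε, hε, hball⟩ := Metric.isOpen_iff.mp hopen 0 h0mem
  have hhalf : (ε/2) ∈ Metric.ball (0:ℝ) ε := by
    rw [Metric.mem_ball, Real.dist_eq, sub_zero, abs_of_pos (by linarith)]
    linarith
  have hpre := hball hhalf
  have hmem2 : (y - (ε/2) • χ) ∈ Δ :=
    (interior_subset (Set.mem_preimage.mp hpre) : γ (ε/2) ∈ _)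
  have := hmem2.1 i
  simp only [Pi.sub_apply, Pi.smul_apply, smul_eq_mul] at this
  rw [← h, hχi] at this
  nlinarith [div_pos hm₀' hai]


set_option maxHeartbeats 1600000 in
/-- Let `a₁, …, a_r ≥ 1` (`r ≥ 2`) with `d = gcd`, let `(v₁, …, v_{r-1})` be a
`ℤ`-basis of `H = {z ∈ ℤ^r : ∑ a i z i = 0}`, let `H_m = {l ∈ ℕ^r : ∑ a i l i = m}`. Fix
`m₀ ≥ 1` and `u ∈ H_{m₀}`, set `C_u = (u + ∑_j [0,1)·v j) ∩ (m₀·Δ_a)` and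
`K_u = ℝ_{≥0} · C_u`. Then (i) there is `K > 0` with `card (K_u ∩ H_m) ≤ K (m/m₀)^{r-1}` for all
`m ≥ 1`, and (ii) if `C_u` lies in the relative interior of `m₀·Δ_a` (in its affine hyperplane),
then `card (K_u ∩ H_m) · (m₀/m)^{r-1} → 1` as `m → ∞` along multiples of `d`. -/
theorem stmt11 (r : ℕ) (hr : 2 ≤ r) (a : Fin r → ℕ) (ha : ∀ i, 1 ≤ a i)
    (d : ℕ) (hd : d = Finset.univ.gcd a)
    (v : Fin (r - 1) → Fin r → ℤ)
    (hv0 : ∀ j, ∑ i, (a i : ℤ) * v j i = 0)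
    (hvli : LinearIndependent ℤ v)
    (hvspan : ∀ z : Fin r → ℤ, (∑ i, (a i : ℤ) * z i = 0) →
      z ∈ Submodule.span ℤ (Set.range v))
    (m₀ : ℕ) (hm₀ : 1 ≤ m₀) (u : Fin r → ℕ) (hu : ∑ i, a i * u i = m₀)
    (Cu : Set (Fin r → ℝ))
    (hCu : Cu = {x | (∃ t : Fin (r - 1) → ℝ, (∀ j, 0 ≤ t j ∧ t j < 1) ∧
          x = (fun i => (u i : ℝ)) + ∑ j, t j • (fun i => (v j i : ℝ))) ∧
        (∀ i, 0 ≤ x i) ∧ ∑ i, (a i : ℝ) * x i = m₀})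
    (Ku : Set (Fin r → ℝ))
    (hKu : Ku = {y | ∃ lam : ℝ, 0 ≤ lam ∧ ∃ x ∈ Cu, y = lam • x})
    (S : ℕ → Set (Fin r → ℕ))
    (hS : ∀ m, S m = {l | ∑ i, a i * l i = m ∧ (fun i => (l i : ℝ)) ∈ Ku}) :
    (∃ K : ℝ, 0 < K ∧ ∀ m : ℕ, 1 ≤ m → (S m).Finite ∧
        ((S m).ncard : ℝ) ≤ K * ((m : ℝ) / (m₀ : ℝ)) ^ (r - 1)) ∧
    ((Cu ⊆ intrinsicInterior ℝ
        {x : Fin r → ℝ | (∀ i, 0 ≤ x i) ∧ ∑ i, (a i : ℝ) * x i = m₀}) →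
      Filter.Tendsto
        (fun n : ℕ => ((S (d * n)).ncard : ℝ) * ((m₀ : ℝ) / ((d * n : ℕ) : ℝ)) ^ (r - 1))
        Filter.atTop (nhds 1)) := by
  classical
  have hm₀R : (0:ℝ) < m₀ := by exact_mod_cast hm₀
  have hd1 : 1 ≤ d := by
    rcases Nat.eq_zero_or_pos d with h0 | h; swap
    · exact h
    exfalso
    rw [hd] at h0
    have h1 := Finset.gcd_eq_zero_iff.mp h0 ⟨0, by omega⟩ (Finset.mem_univ _)
    have h2 := ha ⟨0, by omega⟩
    omega
  have hdR : (0:ℝ) < d := by exact_mod_cast hd1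
  have hdvd : ∀ i, d ∣ a i := fun i => hd ▸ Finset.gcd_dvd (Finset.mem_univ i)
  obtain ⟨w, hw⟩ : ∃ w : Fin r → ℤ, ∑ i, (a i : ℤ) * w i = ((d:ℕ) : ℤ) := by
    obtain ⟨w, hw⟩ := stmt11_bezout a
    exact ⟨w, by rw [hw, hd]⟩
  -- sum swap helpers
  have hswap : ∀ (g : Fin (r-1) → ℤ),
      ∑ i, (a i:ℤ) * ∑ j, g j * v j i = ∑ j, g j * ∑ i, (a i:ℤ) * v j i := by
    intro g
    calc ∑ i, (a i:ℤ) * ∑ j, g j * v j i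
        = ∑ i, ∑ j, (a i:ℤ) * (g j * v j i) := by
          exact Finset.sum_congr rfl fun i _ => Finset.mul_sum _ _ _
      _ = ∑ j, ∑ i, (a i:ℤ) * (g j * v j i) := Finset.sum_comm
      _ = ∑ j, g j * ∑ i, (a i:ℤ) * v j i := by
          refine Finset.sum_congr rfl fun j _ => ?_
          rw [Finset.mul_sum]
          exact Finset.sum_congr rfl fun i _ => by ring
  have hswapR : ∀ (g : Fin (r-1) → ℝ),
      ∑ i, (a i:ℝ) * ∑ j, g j * (v j i:ℝ) = ∑ j, g j * ∑ i, (a i:ℝ) * (v j i:ℝ) := by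
    intro g
    calc ∑ i, (a i:ℝ) * ∑ j, g j * (v j i:ℝ)
        = ∑ i, ∑ j, (a i:ℝ) * (g j * (v j i:ℝ)) := by
          exact Finset.sum_congr rfl fun i _ => Finset.mul_sum _ _ _
      _ = ∑ j, ∑ i, (a i:ℝ) * (g j * (v j i:ℝ)) := Finset.sum_comm
      _ = ∑ j, g j * ∑ i, (a i:ℝ) * (v j i:ℝ) := by
          refine Finset.sum_congr rfl fun j _ => ?_
          rw [Finset.mul_sum]
          exact Finset.sum_congr rfl fun i _ => by ring
  obtain ⟨e, he⟩ : ∃ e : Fin (r-1) → ℤ,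
      ∑ j, e j • v j = (fun i => (d:ℤ) * u i - (m₀:ℤ) * w i) := by
    apply (Submodule.mem_span_range_iff_exists_fun ℤ).mp
    apply hvspan
    have h1 : ∑ i, (a i : ℤ) * u i = (m₀:ℤ) := by exact_mod_cast hu
    have h2 : ∑ i, (a i : ℤ) * ((d:ℤ) * u i - (m₀:ℤ) * w i)
        = (d:ℤ) * ∑ i, (a i:ℤ) * u i - (m₀:ℤ) * ∑ i, (a i:ℤ) * w i := by
      rw [Finset.mul_sum, Finset.mul_sum, ← Finset.sum_sub_distrib]
      exact Finset.sum_congr rfl fun i _ => by ring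
    rw [h2, h1, hw]; ring
  -- linear independence over ℝ
  have hVli : LinearIndependent ℝ (fun j : Fin (r-1) => fun i => (v j i : ℝ)) := by
    obtain ⟨s, rfl⟩ : ∃ s, r = s + 1 := ⟨r - 1, by omega⟩
    set b : Fin (s+1) → Fin (s+1) → ℤ := Fin.snoc v w with hb
    have hspanb : ∀ z : Fin (s+1) → ℤ, z ∈ Submodule.span ℤ (Set.range b) := by
      intro z
      have hdz : ((d:ℕ):ℤ) ∣ ∑ i, (a i:ℤ) * z i :=
        Finset.dvd_sum fun i _ => Dvd.dvd.mul_right (Int.natCast_dvd_natCast.mpr (hdvd i)) _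
      set k : ℤ := (∑ i, (a i:ℤ) * z i) / ((d:ℕ):ℤ) with hk
      have hkd : ((d:ℕ):ℤ) * k = ∑ i, (a i:ℤ) * z i := Int.mul_ediv_cancel' hdz
      have hz2 : ∑ i, (a i:ℤ) * (z i - k * w i) = 0 := by
        have h3 : ∑ i, (a i:ℤ) * (z i - k * w i)
            = ∑ i, (a i:ℤ) * z i - k * ∑ i, (a i:ℤ) * w i := by
          rw [Finset.mul_sum, ← Finset.sum_sub_distrib]
          exact Finset.sum_congr rfl fun i _ => by ring
        rw [h3, hw, ← hkd]; ring
      have hmem := hvspan _ hz2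
      have hmem2 : (fun i => z i - k * w i) ∈ Submodule.span ℤ (Set.range b) := by
        refine Submodule.span_mono ?_ hmem
        rintro _ ⟨j, rfl⟩
        exact ⟨Fin.castSucc j, by rw [hb]; exact Fin.snoc_castSucc _ _ _⟩
      have hw_mem : w ∈ Submodule.span ℤ (Set.range b) :=
        Submodule.subset_span ⟨Fin.last s, by rw [hb]; exact Fin.snoc_last _ _⟩
      have hrepr : z = (fun i => z i - k * w i) + k • w := by
        funext i
        simp only [Pi.add_apply, Pi.smul_apply, smul_eq_mul]
        ring
      rw [hrepr]
      exact Submodule.add_mem _ hmem2 (Submodule.smul_mem _ _ hw_mem)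
    have hli := stmt11_li b hspanb
    have hcomp := hli.comp (Fin.castSucc : Fin s → Fin (s+1)) (Fin.castSucc_injective s)
    have heq : ((fun j : Fin (s+1) => fun i => (b j i : ℝ)) ∘ (Fin.castSucc : Fin s → Fin (s+1)))
        = (fun j : Fin (s+1-1) => fun i => (v j i : ℝ)) := by
      have hsnoc : ∀ j : Fin s, (Fin.snoc v w : Fin (s+1) → Fin (s+1) → ℤ) (Fin.castSucc j) = v j :=
        fun j => Fin.snoc_castSucc _ _ _
      funext j i
      simp only [Function.comp_apply, hb]
      rw [hsnoc j]
    rwa [heq] at hcomp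
  have hVuniq : ∀ c c' : Fin (r-1) → ℝ,
      (∀ i, ∑ j, c j * (v j i : ℝ) = ∑ j, c' j * (v j i : ℝ)) → c = c' := by
    intro c c' hcc
    have h0 : ∑ j, (c j - c' j) • (fun i => (v j i : ℝ)) = 0 := by
      funext i
      simp only [Finset.sum_apply, Pi.smul_apply, smul_eq_mul, Pi.zero_apply, sub_mul]
      rw [Finset.sum_sub_distrib, hcc i]; ring
    have hall := Fintype.linearIndependent_iff.mp hVli (fun j => c j - c' j) h0
    funext j
    have h8 := hall j
    linarith
  have hsumU : ∑ i, (a i:ℝ) * (u i:ℝ) = (m₀:ℝ) := by exact_mod_cast hu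
  have hsumV : ∀ j, ∑ i, (a i:ℝ) * (v j i:ℝ) = 0 := fun j => by exact_mod_cast hv0 j
  have hsumW : ∑ i, (a i:ℝ) * (w i:ℝ) = (d:ℝ) := by exact_mod_cast hw
  have hkey : ∀ (m q : ℕ), m = d * q → ∀ i,
      ((m:ℝ)/(m₀:ℝ)) * (u i : ℝ)
        = (q:ℝ) * (w i:ℝ) + ∑ j, ((m:ℝ) * (e j:ℝ) / ((m₀:ℝ)*(d:ℝ))) * (v j i:ℝ) := by
    intro m q hmq i
    have heR : ∑ j, (e j:ℝ) * (v j i:ℝ) = (d:ℝ) * (u i:ℝ) - (m₀:ℝ) * (w i:ℝ) := by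
      have h := congrFun he i
      simp only [Finset.sum_apply, Pi.smul_apply, smul_eq_mul] at h
      exact_mod_cast h
    have hsum : ∑ j, ((m:ℝ) * (e j:ℝ) / ((m₀:ℝ)*(d:ℝ))) * (v j i:ℝ)
        = ((m:ℝ) / ((m₀:ℝ)*(d:ℝ))) * ∑ j, (e j:ℝ) * (v j i:ℝ) := by
      rw [Finset.mul_sum]; exact Finset.sum_congr rfl fun j _ => by ring
    have hmR : (m:ℝ) = (d:ℝ) * (q:ℝ) := by exact_mod_cast hmq
    rw [hsum, heR, hmR]
    field_simp
    ring
  obtain ⟨Z, hZ⟩ : ∃ Z : ℕ → (Fin (r-1) → ℤ) → (Fin r → ℤ),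
      Z = fun (q : ℕ) (c : Fin (r-1) → ℤ) => fun i => (q:ℤ) * w i + ∑ j, c j * v j i := ⟨_, rfl⟩
  obtain ⟨F, hF⟩ : ∃ F : ℕ → (Fin (r-1) → ℤ) → (Fin r → ℕ),
      F = fun (q : ℕ) (c : Fin (r-1) → ℤ) => fun i => (Z q c i).toNat := ⟨_, rfl⟩
  obtain ⟨box, hbox⟩ : ∃ box : ℕ → Finset (Fin (r-1) → ℤ),
      box = fun (m : ℕ) => Fintype.piFinset
        (fun j => Finset.Ico ⌈(m:ℝ) * (e j:ℝ) / ((m₀:ℝ)*(d:ℝ))⌉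
          ⌈(m:ℝ) * (e j:ℝ) / ((m₀:ℝ)*(d:ℝ)) + (m:ℝ)/(m₀:ℝ)⌉) := ⟨_, rfl⟩
  obtain ⟨N, hN⟩ : ∃ N : ℕ → Fin (r-1) → ℕ,
      N = fun (m : ℕ) (j : Fin (r-1)) => (⌈(m:ℝ) * (e j:ℝ) / ((m₀:ℝ)*(d:ℝ)) + (m:ℝ)/(m₀:ℝ)⌉
        - ⌈(m:ℝ) * (e j:ℝ) / ((m₀:ℝ)*(d:ℝ))⌉).toNat := ⟨_, rfl⟩
  have hZreal : ∀ (m q : ℕ), m = d * q → ∀ (c : Fin (r-1) → ℤ) (i : Fin r),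
      ((Z q c i : ℤ) : ℝ) = ((m:ℝ)/(m₀:ℝ)) * (u i:ℝ)
        + ∑ j, ((c j : ℝ) - (m:ℝ) * (e j:ℝ) / ((m₀:ℝ)*(d:ℝ))) * (v j i:ℝ) := by
    intro m q hmq c i
    have h1 := hkey m q hmq i
    have h2 : ((Z q c i : ℤ) : ℝ) = (q:ℝ) * (w i:ℝ) + ∑ j, (c j:ℝ) * (v j i:ℝ) := by
      simp only [hZ]
      push_cast
      ring
    rw [h2]
    have h3 : ∑ j, ((c j : ℝ) - (m:ℝ) * (e j:ℝ) / ((m₀:ℝ)*(d:ℝ))) * (v j i:ℝ)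
        = ∑ j, (c j:ℝ) * (v j i:ℝ)
          - ∑ j, ((m:ℝ) * (e j:ℝ) / ((m₀:ℝ)*(d:ℝ))) * (v j i:ℝ) := by
      rw [← Finset.sum_sub_distrib]
      exact Finset.sum_congr rfl fun j _ => by ring
    rw [h3, h1]
    ring
  have hAsub : ∀ (m q : ℕ), 1 ≤ m → m = d * q → S m ⊆ (F q) '' ↑(box m) := by
    intro m q hm1 hmq l hl
    have hmRpos : (0:ℝ) < (m:ℝ)/(m₀:ℝ) := by
      apply div_pos _ hm₀R
      exact_mod_cast hm1
    rw [hS] at hl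
    obtain ⟨hl1, hl2⟩ := hl
    rw [hKu] at hl2
    obtain ⟨lam, hlam0, x, hxCu, hlx⟩ := hl2
    rw [hCu] at hxCu
    obtain ⟨⟨t, ht, hxe⟩, hx0, hxsum⟩ := hxCu
    have hxei : ∀ i, x i = (u i:ℝ) + ∑ j, t j * (v j i:ℝ) := by
      intro i
      rw [hxe]
      simp [Finset.sum_apply]
    have hli : ∀ i, (l i : ℝ) = lam * x i := by
      intro i
      have := congrFun hlx i
      simpa using this
    have hsum_l : ∑ i, (a i:ℝ) * (l i:ℝ) = (m:ℝ) := by exact_mod_cast hl1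
    have hsum_l2 : (m:ℝ) = lam * (m₀:ℝ) := by
      rw [← hsum_l, ← hxsum]
      rw [Finset.mul_sum]
      exact Finset.sum_congr rfl fun i _ => by rw [hli i]; ring
    have hlam : lam = (m:ℝ)/(m₀:ℝ) := by
      rw [eq_div_iff (ne_of_gt hm₀R)]
      linarith
    have hzsum : ∑ i, (a i:ℤ) * ((l i:ℤ) - (q:ℤ) * w i) = 0 := by
      have h1 : ∑ i, (a i:ℤ) * (l i:ℤ) = (m:ℤ) := by exact_mod_cast hl1
      have h2 : ∑ i, (a i:ℤ) * ((q:ℤ) * w i) = (m:ℤ) := by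
        have h4 : ∑ i, (a i:ℤ) * ((q:ℤ) * w i) = (q:ℤ) * ∑ i, (a i:ℤ) * w i := by
          rw [Finset.mul_sum]
          exact Finset.sum_congr rfl fun i _ => by ring
        rw [h4, hw, hmq]
        push_cast
        ring
      have h3 : ∑ i, (a i:ℤ) * ((l i:ℤ) - (q:ℤ) * w i)
          = ∑ i, (a i:ℤ) * (l i:ℤ) - ∑ i, (a i:ℤ) * ((q:ℤ) * w i) := by
        rw [← Finset.sum_sub_distrib]
        exact Finset.sum_congr rfl fun i _ => by ring
      rw [h3, h1, h2]; ring
    obtain ⟨c, hc⟩ := (Submodule.mem_span_range_iff_exists_fun ℤ).mp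
      (hvspan (fun i => (l i:ℤ) - (q:ℤ) * w i) hzsum)
    have hci : ∀ i, ∑ j, c j * v j i = (l i:ℤ) - (q:ℤ) * w i := by
      intro i
      have := congrFun hc i
      simpa using this
    have hcoef : ∀ j, (c j : ℝ) = (m:ℝ) * (e j:ℝ) / ((m₀:ℝ)*(d:ℝ)) + ((m:ℝ)/(m₀:ℝ)) * t j := by
      have happ : ∀ i, ∑ j, (c j:ℝ) * (v j i:ℝ)
          = ∑ j, ((m:ℝ) * (e j:ℝ) / ((m₀:ℝ)*(d:ℝ)) + ((m:ℝ)/(m₀:ℝ)) * t j) * (v j i:ℝ) := by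
        intro i
        have h4 : ∑ j, (c j:ℝ) * (v j i:ℝ) = (l i:ℝ) - (q:ℝ) * (w i:ℝ) := by
          exact_mod_cast congrArg (Int.cast : ℤ → ℝ) (hci i)
        have h5 : (l i:ℝ) = ((m:ℝ)/(m₀:ℝ)) * (u i:ℝ) + ∑ j, ((m:ℝ)/(m₀:ℝ)) * t j * (v j i:ℝ) := by
          rw [hli i, hlam, hxei i, mul_add, Finset.mul_sum]
          congr 1
          exact Finset.sum_congr rfl fun j _ => by ring
        have h6 := hkey m q hmq i
        have h7 : ∑ j, ((m:ℝ) * (e j:ℝ) / ((m₀:ℝ)*(d:ℝ)) + ((m:ℝ)/(m₀:ℝ)) * t j) * (v j i:ℝ)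
            = ∑ j, ((m:ℝ) * (e j:ℝ) / ((m₀:ℝ)*(d:ℝ))) * (v j i:ℝ)
              + ∑ j, ((m:ℝ)/(m₀:ℝ)) * t j * (v j i:ℝ) := by
          rw [← Finset.sum_add_distrib]
          exact Finset.sum_congr rfl fun j _ => by ring
        rw [h4, h5, h7]
        rw [show ((m:ℝ)/(m₀:ℝ)) * (u i:ℝ)
          = (q:ℝ) * (w i:ℝ) + ∑ j, ((m:ℝ) * (e j:ℝ) / ((m₀:ℝ)*(d:ℝ))) * (v j i:ℝ) from h6]
        ring
      have h9 := hVuniq (fun j => (c j : ℝ))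
        (fun j => (m:ℝ) * (e j:ℝ) / ((m₀:ℝ)*(d:ℝ)) + ((m:ℝ)/(m₀:ℝ)) * t j) happ
      intro j
      exact congrFun h9 j
    refine ⟨c, ?_, ?_⟩
    · rw [Finset.mem_coe, hbox, Fintype.mem_piFinset]
      intro j
      rw [Finset.mem_Ico]
      constructor
      · rw [Int.ceil_le, hcoef j]
        nlinarith [(ht j).1, (ht j).2, hmRpos]
      · rw [Int.lt_ceil, hcoef j]
        nlinarith [(ht j).1, (ht j).2, hmRpos]
    · funext i
      simp only [hF]
      have h10 : Z q c i = (l i : ℤ) := by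
        simp only [hZ]
        rw [hci i]
        ring
      rw [h10]
      exact Int.toNat_natCast _
  -- geometric lemma
  have hgeom : (∀ x ∈ Cu, ∀ i, (0:ℝ) < x i) → ∀ t : Fin (r-1) → ℝ,
      (∀ j, 0 ≤ t j ∧ t j < 1) → ∀ i, (0:ℝ) ≤ (u i:ℝ) + ∑ j, t j * (v j i:ℝ) := by
    intro hpos t ht
    by_contra hcon
    push_neg at hcon
    obtain ⟨i0, hi0⟩ := hcon
    set xf : ℝ → Fin r → ℝ := fun θ i => (u i:ℝ) + ∑ j, (θ * t j) * (v j i:ℝ) with hxf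
    have hcontf : ∀ i, Continuous (fun θ => xf θ i) := by
      intro i
      simp only [hxf]
      fun_prop
    set A : Set ℝ := {θ | θ ∈ Set.Icc (0:ℝ) 1 ∧ ∀ i, 0 ≤ xf θ i} with hA
    have hA0 : (0:ℝ) ∈ A := by
      refine ⟨⟨le_refl _, zero_le_one⟩, fun i => ?_⟩
      simp [hxf]
    have hAclosed : IsClosed A := by
      have hAeq : A = Set.Icc (0:ℝ) 1 ∩ ⋂ i, (fun θ => xf θ i) ⁻¹' Set.Ici (0:ℝ) := by
        ext θ
        simp [hA, Set.mem_iInter]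
      rw [hAeq]
      exact isClosed_Icc.inter (isClosed_iInter fun i => (isClosed_Ici).preimage (hcontf i))
    have hAcomp : IsCompact A :=
      IsCompact.of_isClosed_subset isCompact_Icc hAclosed (fun θ hθ => hθ.1)
    set θs := sSup A with hθs
    have hθsA : θs ∈ A := hAcomp.sSup_mem ⟨0, hA0⟩
    have hθnn : 0 ≤ θs := hθsA.1.1
    have hθle : θs ≤ 1 := hθsA.1.2
    have hxCu : xf θs ∈ Cu := by
      rw [hCu]
      refine ⟨⟨fun j => θs * t j, fun j => ⟨mul_nonneg hθnn (ht j).1, ?_⟩, ?_⟩, hθsA.2, ?_⟩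
      · calc θs * t j ≤ 1 * t j := mul_le_mul_of_nonneg_right hθle (ht j).1
          _ = t j := one_mul _
          _ < 1 := (ht j).2
      · funext i
        simp [hxf, Finset.sum_apply]
      · have h11 : ∑ i, (a i:ℝ) * xf θs i
            = ∑ i, (a i:ℝ) * (u i:ℝ) + ∑ j, (θs * t j) * ∑ i, (a i:ℝ) * (v j i:ℝ) := by
          rw [← hswapR (fun j => θs * t j), ← Finset.sum_add_distrib]
          exact Finset.sum_congr rfl fun i _ => by simp only [hxf]; ring
        rw [h11, hsumU]
        simp [hsumV]
    have hposx := hpos _ hxCu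
    have h1nA : (1:ℝ) ∉ A := by
      intro h1A
      have h12 := h1A.2 i0
      simp only [hxf, one_mul] at h12
      linarith
    have hθlt : θs < 1 := lt_of_le_of_ne hθle (fun h => h1nA (h ▸ hθsA))
    set Wo : Set ℝ := ⋂ i, (fun θ => xf θ i) ⁻¹' Set.Ioi (0:ℝ) with hWo
    have hWopen : IsOpen Wo := isOpen_iInter_of_finite fun i => (isOpen_Ioi).preimage (hcontf i)
    have hθW : θs ∈ Wo := Set.mem_iInter.mpr fun i => hposx i
    obtain ⟨ε, hε, hball⟩ := Metric.isOpen_iff.mp hWopen θs hθW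
    set θ' := min (θs + ε/2) 1 with hθ'
    have hθ'gt : θs < θ' := lt_min (by linarith) hθlt
    have hθ'ball : θ' ∈ Metric.ball θs ε := by
      rw [Metric.mem_ball, Real.dist_eq, abs_lt]
      constructor
      · linarith
      · have := min_le_left (θs + ε/2) 1
        linarith
    have hθ'A : θ' ∈ A := by
      refine ⟨⟨le_trans hθnn (le_of_lt hθ'gt), min_le_right _ _⟩, fun i => le_of_lt ?_⟩
      exact Set.mem_iInter.mp (hball hθ'ball) i
    have := le_csSup hAcomp.bddAbove hθ'A
    linarith
  -- part B
  have hBcore : (∀ x ∈ Cu, ∀ i, (0:ℝ) < x i) → ∀ (m q : ℕ), 1 ≤ m → m = d * q →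
      ∀ c ∈ box m, (∀ i, 0 ≤ Z q c i) ∧ F q c ∈ S m := by
    intro hpos m q hm1 hmq c hcbox
    have hmRpos : (0:ℝ) < (m:ℝ)/(m₀:ℝ) := by
      apply div_pos _ hm₀R
      exact_mod_cast hm1
    set lam : ℝ := (m:ℝ)/(m₀:ℝ) with hlamdef
    set t : Fin (r-1) → ℝ :=
      fun j => ((c j:ℝ) - (m:ℝ) * (e j:ℝ) / ((m₀:ℝ)*(d:ℝ))) / lam with htdef
    have hcb : ∀ j, (m:ℝ) * (e j:ℝ) / ((m₀:ℝ)*(d:ℝ)) ≤ (c j:ℝ)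
        ∧ (c j:ℝ) < (m:ℝ) * (e j:ℝ) / ((m₀:ℝ)*(d:ℝ)) + lam := by
      intro j
      rw [hbox, Fintype.mem_piFinset] at hcbox
      have h13 := hcbox j
      rw [Finset.mem_Ico] at h13
      exact ⟨Int.ceil_le.mp h13.1, Int.lt_ceil.mp h13.2⟩
    have ht : ∀ j, 0 ≤ t j ∧ t j < 1 := by
      intro j
      constructor
      · apply div_nonneg _ (le_of_lt hmRpos)
        linarith [(hcb j).1]
      · rw [div_lt_one hmRpos]
        linarith [(hcb j).2]
    set x : Fin r → ℝ := fun i => (u i:ℝ) + ∑ j, t j * (v j i:ℝ) with hx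
    have hZx : ∀ i, ((Z q c i : ℤ) : ℝ) = lam * x i := by
      intro i
      rw [hZreal m q hmq c i]
      simp only [hx]
      rw [mul_add, Finset.mul_sum]
      congr 1
      refine Finset.sum_congr rfl fun j _ => ?_
      simp only [htdef]
      field_simp
    have hx0 : ∀ i, 0 ≤ x i := fun i => hgeom hpos t ht i
    have hZnn : ∀ i, 0 ≤ Z q c i := by
      intro i
      have h14 : (0:ℝ) ≤ ((Z q c i : ℤ) : ℝ) := by
        rw [hZx i]
        exact mul_nonneg (le_of_lt hmRpos) (hx0 i)
      exact_mod_cast h14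
    refine ⟨hZnn, ?_⟩
    have hFlZ : ∀ i, ((F q c i : ℕ) : ℤ) = Z q c i := by
      intro i
      simp only [hF]
      rw [Int.toNat_of_nonneg (hZnn i)]
    have hFl : ∀ i, ((F q c i : ℕ) : ℝ) = lam * x i := by
      intro i
      rw [← hZx i]
      exact_mod_cast congrArg (Int.cast : ℤ → ℝ) (hFlZ i)
    rw [hS]
    refine ⟨?_, ?_⟩
    · have hZsum : ∑ i, (a i:ℤ) * Z q c i = (m:ℤ) := by
        have h1 : ∑ i, (a i:ℤ) * Z q c i
            = (q:ℤ) * ∑ i, (a i:ℤ) * w i + ∑ j, c j * ∑ i, (a i:ℤ) * v j i := by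
          simp only [hZ]
          rw [← hswap c]
          rw [Finset.mul_sum, ← Finset.sum_add_distrib]
          exact Finset.sum_congr rfl fun i _ => by ring
        rw [h1, hw]
        have h15 : ∀ j, ∑ i, (a i:ℤ) * v j i = 0 := hv0
        simp only [h15, mul_zero, Finset.sum_const_zero, add_zero]
        rw [hmq]
        push_cast
        ring
      have h16 : ((∑ i, a i * F q c i : ℕ) : ℤ) = (m:ℤ) := by
        push_cast
        rw [← hZsum]
        exact Finset.sum_congr rfl fun i _ => by rw [hFlZ i]
      exact_mod_cast h16
    · rw [hKu]
      refine ⟨lam, le_of_lt hmRpos, x, ?_, ?_⟩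
      · rw [hCu]
        refine ⟨⟨t, ht, ?_⟩, hx0, ?_⟩
        · funext i
          simp [hx, Finset.sum_apply]
        · have h17 : ∑ i, (a i:ℝ) * x i
              = ∑ i, (a i:ℝ) * (u i:ℝ) + ∑ j, t j * ∑ i, (a i:ℝ) * (v j i:ℝ) := by
            rw [← hswapR t, ← Finset.sum_add_distrib]
            exact Finset.sum_congr rfl fun i _ => by simp only [hx]; ring
          rw [h17, hsumU]
          simp [hsumV]
      · funext i
        rw [hFl i]
        simp
  -- cardinality facts
  have hNcast : ∀ m : ℕ, 1 ≤ m → ∀ j, ((N m j : ℕ):ℝ)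
      = (⌈(m:ℝ)*(e j:ℝ)/((m₀:ℝ)*(d:ℝ)) + (m:ℝ)/(m₀:ℝ)⌉ : ℝ)
        - (⌈(m:ℝ)*(e j:ℝ)/((m₀:ℝ)*(d:ℝ))⌉ : ℝ) := by
    intro m hm j
    have hmRpos : (0:ℝ) < (m:ℝ)/(m₀:ℝ) := by
      apply div_pos _ hm₀R
      exact_mod_cast hm
    have hnn : 0 ≤ ⌈(m:ℝ)*(e j:ℝ)/((m₀:ℝ)*(d:ℝ)) + (m:ℝ)/(m₀:ℝ)⌉
        - ⌈(m:ℝ)*(e j:ℝ)/((m₀:ℝ)*(d:ℝ))⌉ :=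
      sub_nonneg.mpr (Int.ceil_le_ceil (by linarith))
    simp only [hN]
    rw [← Int.cast_natCast (R := ℝ), Int.toNat_of_nonneg hnn]
    push_cast
    ring
  have hNle : ∀ m : ℕ, 1 ≤ m → ∀ j, ((N m j:ℕ):ℝ) ≤ (m:ℝ)/(m₀:ℝ) + 1 := by
    intro m hm j
    rw [hNcast m hm j]
    have h1 := Int.ceil_lt_add_one ((m:ℝ)*(e j:ℝ)/((m₀:ℝ)*(d:ℝ)) + (m:ℝ)/(m₀:ℝ))
    have h2 := Int.le_ceil ((m:ℝ)*(e j:ℝ)/((m₀:ℝ)*(d:ℝ)))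
    linarith
  have hNge : ∀ m : ℕ, 1 ≤ m → ∀ j, (m:ℝ)/(m₀:ℝ) - 1 ≤ ((N m j:ℕ):ℝ) := by
    intro m hm j
    rw [hNcast m hm j]
    have h1 := Int.le_ceil ((m:ℝ)*(e j:ℝ)/((m₀:ℝ)*(d:ℝ)) + (m:ℝ)/(m₀:ℝ))
    have h2 := Int.ceil_lt_add_one ((m:ℝ)*(e j:ℝ)/((m₀:ℝ)*(d:ℝ)))
    linarith
  have hboxcard : ∀ m : ℕ, (box m).card = ∏ j, N m j := by
    intro m
    simp only [hbox, hN]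
    rw [Fintype.card_piFinset]
    exact Finset.prod_congr rfl fun j _ => Int.card_Ico _ _
  have hfin : ∀ m q : ℕ, 1 ≤ m → m = d*q →
      (S m).Finite ∧ ((S m).ncard :ℝ) ≤ ∏ j, ((N m j:ℕ):ℝ) := by
    intro m q hm hmq
    have hsub := hAsub m q hm hmq
    have hfinbox : ((F q) '' ↑(box m)).Finite := ((box m).finite_toSet).image _
    refine ⟨hfinbox.subset hsub, ?_⟩
    have h1 : (S m).ncard ≤ ((F q) '' ↑(box m)).ncard := Set.ncard_le_ncard hsub hfinbox
    have h2 : ((F q) '' ↑(box m)).ncard ≤ (box m).card := by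
      have h18 := Set.ncard_image_le (s := (↑(box m) : Set (Fin (r-1) → ℤ))) (f := F q)
        ((box m).finite_toSet)
      rwa [Set.ncard_coe_finset] at h18
    have h3 : ((S m).ncard : ℝ) ≤ ((∏ j, N m j : ℕ) : ℝ) := by
      exact_mod_cast le_trans h1 (le_of_le_of_eq h2 (hboxcard m))
    rwa [Nat.cast_prod] at h3
  have hcard : (∀ x ∈ Cu, ∀ i, (0:ℝ) < x i) → ∀ m q : ℕ, 1 ≤ m → m = d*q →
      ((S m).ncard : ℝ) = ∏ j, ((N m j:ℕ):ℝ) := by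
    intro hpos m q hm hmq
    have hS_eq : S m = (F q) '' ↑(box m) := by
      apply Set.Subset.antisymm (hAsub m q hm hmq)
      rintro _ ⟨c, hc, rfl⟩
      exact (hBcore hpos m q hm hmq c hc).2
    have hinj : Set.InjOn (F q) ↑(box m) := by
      intro c hc c' hc' hFeq
      have h1 := (hBcore hpos m q hm hmq c hc).1
      have h2 := (hBcore hpos m q hm hmq c' hc').1
      have hZeq : ∀ i, Z q c i = Z q c' i := by
        intro i
        have h19 := congrFun hFeq i
        simp only [hF] at h19
        rw [← Int.toNat_of_nonneg (h1 i), ← Int.toNat_of_nonneg (h2 i), h19]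
      have hsum0 : ∑ j, (c j - c' j) • v j = 0 := by
        funext i
        simp only [Finset.sum_apply, Pi.smul_apply, smul_eq_mul, Pi.zero_apply]
        have h20 := hZeq i
        simp only [hZ] at h20
        have h21 : ∑ j, c j * v j i = ∑ j, c' j * v j i := by linarith
        have h22 : ∑ j, (c j - c' j) * v j i
            = ∑ j, c j * v j i - ∑ j, c' j * v j i := by
          rw [← Finset.sum_sub_distrib]
          exact Finset.sum_congr rfl fun j _ => by ring
        rw [h22, h21]; ring
      have hall := Fintype.linearIndependent_iff.mp hvli (fun j => c j - c' j) hsum0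
      funext j
      have h23 := hall j
      linarith
    rw [hS_eq, Set.ncard_image_of_injOn hinj, Set.ncard_coe_finset, hboxcard m]
    rw [Nat.cast_prod]
  constructor
  · -- part (i)
    refine ⟨((m₀:ℝ)+1)^(r-1), by positivity, ?_⟩
    intro m hm
    by_cases hdm : d ∣ m
    · obtain ⟨q, hq⟩ := hdm
      obtain ⟨hfin1, hbd⟩ := hfin m q hm hq
      refine ⟨hfin1, ?_⟩
      refine le_trans hbd ?_
      have hle2 : ∀ j : Fin (r-1), ((N m j:ℕ):ℝ) ≤ ((m₀:ℝ)+1) * ((m:ℝ)/(m₀:ℝ)) := by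
        intro j
        refine le_trans (hNle m hm j) ?_
        have h1 : (1:ℝ) ≤ (m:ℝ) := by exact_mod_cast hm
        have h24 : ((m₀:ℝ)+1) * ((m:ℝ)/(m₀:ℝ)) = (m:ℝ) + (m:ℝ)/(m₀:ℝ) := by
          field_simp
        rw [h24]
        linarith
      calc ∏ j, ((N m j:ℕ):ℝ)
          ≤ ∏ _j : Fin (r-1), (((m₀:ℝ)+1) * ((m:ℝ)/(m₀:ℝ))) :=
            Finset.prod_le_prod (fun j _ => by positivity) (fun j _ => hle2 j)
        _ = (((m₀:ℝ)+1) * ((m:ℝ)/(m₀:ℝ)))^(r-1) := by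
            rw [Finset.prod_const]
            congr 1
            simp
        _ = ((m₀:ℝ)+1)^(r-1) * ((m:ℝ)/(m₀:ℝ))^(r-1) := mul_pow _ _ _
    · have hSempty : S m = ∅ := by
        ext l
        simp only [hS, Set.mem_setOf_eq, Set.mem_empty_iff_false, iff_false, not_and]
        intro hl1
        exfalso
        exact hdm (hl1 ▸ Finset.dvd_sum fun i _ => (hdvd i).mul_right _)
      rw [hSempty]
      refine ⟨Set.finite_empty, ?_⟩
      rw [Set.ncard_empty]
      have : (0:ℝ) ≤ ((m₀:ℝ)+1)^(r-1) * ((m:ℝ)/(m₀:ℝ))^(r-1) := by positivity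
      simpa using this
  · -- part (ii)
    intro hsubint
    have hpos : ∀ x ∈ Cu, ∀ i, (0:ℝ) < x i :=
      fun x hx i => stmt11_intpos hr a ha m₀ hm₀ x (hsubint hx) i
    have hg : Filter.Tendsto (fun n : ℕ => (m₀:ℝ)/(((d*n : ℕ)):ℝ)) Filter.atTop (nhds 0) := by
      have h1 := tendsto_const_div_atTop_nhds_zero_nat ((m₀:ℝ)/(d:ℝ))
      have h25 : (fun n : ℕ => (m₀:ℝ)/(((d*n:ℕ)):ℝ)) = fun n : ℕ => ((m₀:ℝ)/(d:ℝ))/(n:ℝ) := by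
        funext n
        push_cast
        rw [div_div]
      rwa [h25]
    have hlo : Filter.Tendsto (fun n : ℕ => ((1:ℝ) - (m₀:ℝ)/(((d*n:ℕ)):ℝ))^(r-1))
        Filter.atTop (nhds 1) := by
      have h26 := (Filter.Tendsto.const_sub (1:ℝ) hg).pow (r-1)
      simpa using h26
    have hhi : Filter.Tendsto (fun n : ℕ => ((1:ℝ) + (m₀:ℝ)/(((d*n:ℕ)):ℝ))^(r-1))
        Filter.atTop (nhds 1) := by
      have h27 := (Filter.Tendsto.const_add (1:ℝ) hg).pow (r-1)
      simpa using h27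
    refine tendsto_of_tendsto_of_tendsto_of_le_of_le' hlo hhi ?_ ?_
    · filter_upwards [Filter.eventually_ge_atTop m₀] with n hn
      have hn1 : 1 ≤ n := le_trans hm₀ hn
      have hm1 : 1 ≤ d * n := Nat.one_le_iff_ne_zero.mpr (Nat.mul_ne_zero (by omega) (by omega))
      have hmm₀ : (m₀:ℝ) ≤ ((d*n:ℕ):ℝ) := by
        have : m₀ ≤ d * n := le_trans hn (Nat.le_mul_of_pos_left n hd1)
        exact_mod_cast this
      have hmpos : (0:ℝ) < ((d*n:ℕ):ℝ) := lt_of_lt_of_le hm₀R hmm₀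
      have hμ : (0:ℝ) < (m₀:ℝ)/((d*n:ℕ):ℝ) := div_pos hm₀R hmpos
      have hμ1 : (m₀:ℝ)/((d*n:ℕ):ℝ) ≤ 1 := by
        rw [div_le_one hmpos]
        exact hmm₀
      rw [hcard hpos (d*n) n hm1 rfl]
      have hpowμ : ((m₀:ℝ)/((d*n:ℕ):ℝ))^(r-1) = ∏ _j : Fin (r-1), (m₀:ℝ)/((d*n:ℕ):ℝ) := by
        rw [Finset.prod_const]
        congr 1
        simp
      have hpow1 : ((1:ℝ) - (m₀:ℝ)/((d*n:ℕ):ℝ))^(r-1)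
          = ∏ _j : Fin (r-1), ((1:ℝ) - (m₀:ℝ)/((d*n:ℕ):ℝ)) := by
        rw [Finset.prod_const]
        congr 1
        simp
      rw [hpowμ, hpow1, ← Finset.prod_mul_distrib]
      apply Finset.prod_le_prod
      · intro j _
        linarith
      · intro j _
        have h1 := hNge (d*n) hm1 j
        have hmulone : (((d*n:ℕ):ℝ)/(m₀:ℝ)) * ((m₀:ℝ)/((d*n:ℕ):ℝ)) = 1 := by
          field_simp
        nlinarith
    · filter_upwards [Filter.eventually_ge_atTop m₀] with n hn
      have hn1 : 1 ≤ n := le_trans hm₀ hn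
      have hm1 : 1 ≤ d * n := Nat.one_le_iff_ne_zero.mpr (Nat.mul_ne_zero (by omega) (by omega))
      have hmm₀ : (m₀:ℝ) ≤ ((d*n:ℕ):ℝ) := by
        have : m₀ ≤ d * n := le_trans hn (Nat.le_mul_of_pos_left n hd1)
        exact_mod_cast this
      have hmpos : (0:ℝ) < ((d*n:ℕ):ℝ) := lt_of_lt_of_le hm₀R hmm₀
      have hμ : (0:ℝ) < (m₀:ℝ)/((d*n:ℕ):ℝ) := div_pos hm₀R hmpos
      rw [hcard hpos (d*n) n hm1 rfl]
      have hpowμ : ((m₀:ℝ)/((d*n:ℕ):ℝ))^(r-1) = ∏ _j : Fin (r-1), (m₀:ℝ)/((d*n:ℕ):ℝ) := by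
        rw [Finset.prod_const]
        congr 1
        simp
      have hpow1 : ((1:ℝ) + (m₀:ℝ)/((d*n:ℕ):ℝ))^(r-1)
          = ∏ _j : Fin (r-1), ((1:ℝ) + (m₀:ℝ)/((d*n:ℕ):ℝ)) := by
        rw [Finset.prod_const]
        congr 1
        simp
      rw [hpowμ, hpow1, ← Finset.prod_mul_distrib]
      apply Finset.prod_le_prod
      · intro j _
        have := hNge (d*n) hm1 j
        positivity
      · intro j _
        have h1 := hNle (d*n) hm1 j
        have hmulone : (((d*n:ℕ):ℝ)/(m₀:ℝ)) * ((m₀:ℝ)/((d*n:ℕ):ℝ)) = 1 := by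
          field_simp
        nlinarith
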